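/- arXiv:1801.04641 — 2 statements merged into one kernel-verified Lean document; each statement's English description precedes it below -/
import Mathlib

section
/- Let c : ℕ → ℝ be defined by c(n) = 0 for n ≤ 3 and, for n ≥ 4, c(n) = c(⌊n/2⌋) + c(⌊n/2⌋ − 1) + (3/2)·n + (1/2)·(n mod 2), and let b(x) = c(⌊x − 3⌋) for real x. Then for all real x ≥ 3, b(x) ≥ (3/2)·[x·(⌊log₂ x⌋ − 2) − x + 3]. -/
lemma c_nonneg (c : ℕ → ℝ)
    (h0 : ∀ n ≤ 3, c n = 0)
    (hrec : ∀ n, 4 ≤ n →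
      c n = c (n / 2) + c (n / 2 - 1) + 3 / 2 * (n : ℝ) + 1 / 2 * ((n % 2 : ℕ) : ℝ)) :
    ∀ n, 0 ≤ c n := by
  intro n
  induction n using Nat.strong_induction_on with
  | _ n ih =>
    rcases le_or_gt n 3 with h | h
    · rw [h0 n h]
    · rw [hrec n h]
      have i1 : 0 ≤ c (n / 2) := ih _ (by omega)
      have i2 : 0 ≤ c (n / 2 - 1) := ih _ (by omega)
      have : (0:ℝ) ≤ (n:ℝ) := by positivity
      have : (0:ℝ) ≤ ((n % 2 : ℕ):ℝ) := by positivity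
      linarith

lemma claim (c : ℕ → ℝ)
    (h0 : ∀ n ≤ 3, c n = 0)
    (hrec : ∀ n, 4 ≤ n →
      c n = c (n / 2) + c (n / 2 - 1) + 3 / 2 * (n : ℝ) + 1 / 2 * ((n % 2 : ℕ) : ℝ)) :
    ∀ j n : ℕ, 2 ^ (j + 3) ≤ n + 3 →
      3 / 2 * (((n:ℝ) + 4) * j + 3 + (if j = 0 then 1 else 0)) ≤ c n := by
  intro j
  induction j with
  | zero =>
    intro n hn
    have hn5 : 5 ≤ n := by norm_num at hn; omega
    rw [hrec n (by omega)]
    have i1 : 0 ≤ c (n / 2) := c_nonneg c h0 hrec _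
    have i2 : 0 ≤ c (n / 2 - 1) := c_nonneg c h0 hrec _
    have hr : (0:ℝ) ≤ ((n % 2 : ℕ):ℝ) := by positivity
    have hnR : (5:ℝ) ≤ (n:ℝ) := by exact_mod_cast hn5
    norm_num
    nlinarith
  | succ j ih =>
    intro n hn
    have hpow : 2 ^ (j + 1 + 3) = 2 * 2 ^ (j + 3) := by ring
    have h8 : 8 ≤ 2 ^ (j + 3) := by
      calc 8 = 2 ^ 3 := by norm_num
        _ ≤ 2 ^ (j + 3) := Nat.pow_le_pow_right (by norm_num) (by omega)
    have hn13 : 13 ≤ n := by omega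
    have hq1 : 2 ^ (j + 3) ≤ n / 2 + 3 := by omega
    have hq2 : 2 ^ (j + 3) ≤ (n / 2 - 1) + 3 := by omega
    have i1 := ih (n / 2) hq1
    have i2 := ih (n / 2 - 1) hq2
    rw [hrec n (by omega)]
    -- cast facts
    have hqc : ((n / 2 - 1 : ℕ):ℝ) = ((n / 2 : ℕ):ℝ) - 1 := by
      have : 1 ≤ n / 2 := by omega
      push_cast [Nat.cast_sub this]
      ring
    have hnc : (n:ℝ) = 2 * ((n / 2 : ℕ):ℝ) + ((n % 2 : ℕ):ℝ) := by
      have : n = 2 * (n / 2) + n % 2 := by omega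
      exact_mod_cast congrArg (Nat.cast : ℕ → ℝ) this
    have hrle : ((n % 2 : ℕ):ℝ) ≤ 1 := by
      have : n % 2 ≤ 1 := by omega
      exact_mod_cast this
    have hr0 : (0:ℝ) ≤ ((n % 2 : ℕ):ℝ) := by positivity
    rw [hqc] at i2
    rcases Nat.eq_zero_or_pos j with hj | hj
    · subst hj
      norm_num at i1 i2 ⊢
      nlinarith
    · have hjne : j ≠ 0 := by omega
      have hjne' : j + 1 ≠ 0 := by omega
      simp only [if_neg hjne] at i1 i2
      simp only [if_neg hjne']
      have hjR : (1:ℝ) ≤ (j:ℝ) := by exact_mod_cast hj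
      push_cast
      nlinarith [mul_le_mul_of_nonneg_right hrle (by linarith : (0:ℝ) ≤ (j:ℝ))]

/-- For `b(x) = c(⌊x - 3⌋)`, where `c` is the Timsort worst-case merge cost recurrence,
we have `b(x) ≥ (3/2)·[x·(⌊log₂ x⌋ - 2) - x + 3]` for all real `x ≥ 3`. -/
theorem timsort_b_lower_bound (c : ℕ → ℝ) (b : ℝ → ℝ)
    (h0 : ∀ n ≤ 3, c n = 0)
    (hrec : ∀ n, 4 ≤ n →
      c n = c (n / 2) + c (n / 2 - 1) + 3 / 2 * (n : ℝ) + 1 / 2 * ((n % 2 : ℕ) : ℝ))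
    (hb : ∀ x : ℝ, b x = c ⌊x - 3⌋₊) :
    ∀ x : ℝ, 3 ≤ x →
      3 / 2 * (x * ((⌊Real.logb 2 x⌋ : ℝ) - 2) - x + 3) ≤ b x := by
  intro x hx
  rw [hb]
  set n := ⌊x - 3⌋₊ with hndef
  have hn2 : x - 3 < n + 1 := Nat.lt_floor_add_one _
  have hcn : 0 ≤ c n := c_nonneg c h0 hrec n
  set k : ℤ := ⌊Real.logb 2 x⌋ with hkdef
  rcases le_or_gt k 2 with hk2 | hk3
  · have hkR : (k:ℝ) ≤ 2 := by exact_mod_cast hk2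
    nlinarith
  · have hkR3 : (3:ℝ) ≤ (k:ℝ) := by exact_mod_cast hk3
    have hkx : (k:ℝ) ≤ Real.logb 2 x := Int.floor_le _
    have hxpos : (0:ℝ) < x := by linarith
    have hxk : (2:ℝ) ^ ((k:ℝ)) ≤ x := by
      calc (2:ℝ) ^ ((k:ℝ)) ≤ (2:ℝ) ^ (Real.logb 2 x) :=
            Real.rpow_le_rpow_of_exponent_le (by norm_num) hkx
        _ = x := Real.rpow_logb (by norm_num) (by norm_num) hxpos
    set j : ℕ := (k - 3).toNat with hjdef
    have hjk : (j:ℝ) = (k:ℝ) - 3 := by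
      have : ((k - 3).toNat : ℤ) = k - 3 := Int.toNat_of_nonneg (by omega)
      push_cast [hjdef]
      exact_mod_cast congrArg (Int.cast : ℤ → ℝ) this
    have hpowc : ((2 ^ (j + 3) : ℕ):ℝ) = (2:ℝ) ^ ((k:ℝ)) := by
      have h1 : ((2 ^ (j + 3) : ℕ):ℝ) = (2:ℝ) ^ ((j + 3 : ℕ):ℝ) := by
        rw [Real.rpow_natCast]; push_cast; ring
      rw [h1]
      congr 1
      push_cast
      linarith [hjk]
    have hxn4 : x < (n:ℝ) + 4 := by linarith
    have hle : 2 ^ (j + 3) ≤ n + 3 := by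
      have : ((2 ^ (j + 3) : ℕ):ℝ) < (n:ℝ) + 4 := by rw [hpowc]; linarith
      have : (2 ^ (j + 3) : ℕ) < n + 4 := by exact_mod_cast this
      omega
    have hclaim := claim c h0 hrec j n hle
    have he : (0:ℝ) ≤ (if j = 0 then (1:ℝ) else 0) := by split <;> norm_num
    have hj0 : (0:ℝ) ≤ (j:ℝ) := by positivity
    have hmul : x * (j:ℝ) ≤ ((n:ℝ) + 4) * (j:ℝ) :=
      mul_le_mul_of_nonneg_right (by linarith) hj0
    nlinarith
end

section
/- Let n₁, n₂, m₁, m₂ be positive integers with n₂ ≤ n₁. Then G₂(n₁, m₁) + H₂(n₂, m₂) + n₁ + n₂ ≤ H₂(n₁ + n₂, m₁ + m₂), where G₂(n, m) = n·(d₂ − 1 + c₂·log₂ m), H₂(n, m) = n·(d₂ + c₂·log₂(m − 1)) for m ≥ 2 and H₂(n, 1) = 0, with c₂ = 3/log₂(27/4) and d₂ = 6 − c₂·(3·log₂ 3 − 1). -/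
open Real

/-- The constant `c₂ = 3 / log₂(27/4)`. -/
noncomputable def c2 : ℝ := 3 / logb 2 (27 / 4)

/-- The constant `d₂ = 6 − c₂·(3·log₂ 3 − 1)`. -/
noncomputable def d2 : ℝ := 6 - c2 * (3 * logb 2 3 - 1)

/-- `G₂(n, m) = n·(d₂ − 1 + c₂·log₂ m)`. -/
noncomputable def G2 (n m : ℕ) : ℝ := (n : ℝ) * (d2 - 1 + c2 * logb 2 m)

/-- `H₂(n, m) = n·(d₂ + c₂·log₂(m−1))` for `m ≥ 2`, and `H₂(n, 1) = 0`. -/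
noncomputable def H2 (n m : ℕ) : ℝ :=
  if m = 1 then 0 else (n : ℝ) * (d2 + c2 * logb 2 ((m : ℝ) - 1))

lemma logb2_three : (7:ℝ)/6 ≤ logb 2 3 := by
  have h1 : logb 2 ((2:ℝ)^(7:ℕ)) ≤ logb 2 ((3:ℝ)^(6:ℕ)) := by
    apply Real.logb_le_logb_of_le (by norm_num) (by positivity) (by norm_num)
  rw [Real.logb_pow, Real.logb_pow, Real.logb_self_eq_one (by norm_num)] at h1
  push_cast at h1
  linarith

lemma logb274 : logb 2 (27/4 : ℝ) = 3 * logb 2 3 - 2 := by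
  rw [Real.logb_div (by norm_num) (by norm_num),
    show (27:ℝ) = 3^(3:ℕ) by norm_num, show (4:ℝ) = 2^(2:ℕ) by norm_num,
    Real.logb_pow, Real.logb_pow, Real.logb_self_eq_one (by norm_num)]
  ring

lemma logb274_pos : 0 < logb 2 (27/4 : ℝ) :=
  Real.logb_pos (by norm_num) (by norm_num)

lemma c2_pos : 0 < c2 := div_pos (by norm_num) logb274_pos

lemma one_le_two_c2 : 1 ≤ 2 * c2 := by
  have h1 := logb2_three
  have h2 := logb274
  have h3 := logb274_pos
  have h4 : logb 2 (3:ℝ) ≤ logb 2 ((2:ℝ)^(2:ℕ)) :=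
    Real.logb_le_logb_of_le (by norm_num) (by norm_num) (by norm_num)
  rw [Real.logb_pow, Real.logb_self_eq_one (by norm_num)] at h4
  push_cast at h4
  have h5 : logb 2 (27/4 : ℝ) ≤ 6 := by rw [h2]; linarith
  have h6 : (1:ℝ) ≤ 6 / logb 2 (27/4) := (one_le_div h3).mpr h5
  rw [c2, show 2 * (3 / logb 2 (27/4 : ℝ)) = 6 / logb 2 (27/4 : ℝ) by ring]
  exact h6

lemma one_le_d2 : 1 ≤ d2 := by
  have h1 := logb2_three
  rw [d2, c2, logb274]
  have hpos : 0 < 3 * logb 2 3 - 2 := by linarith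
  have key : 3 / (3 * logb 2 3 - 2) * (3 * logb 2 3 - 1) ≤ 5 := by
    rw [div_mul_eq_mul_div, div_le_iff₀ hpos]
    nlinarith
  linarith

/-- Lemma 11(a): if `n₂ ≤ n₁` then
`G₂(n₁,m₁) + H₂(n₂,m₂) + n₁ + n₂ ≤ H₂(n₁+n₂, m₁+m₂)`. -/
theorem GH2_bound_a (n₁ n₂ m₁ m₂ : ℕ)
    (hn₁ : 0 < n₁) (hn₂ : 0 < n₂) (hm₁ : 0 < m₁) (hm₂ : 0 < m₂)
    (h : n₂ ≤ n₁) :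
    G2 n₁ m₁ + H2 n₂ m₂ + n₁ + n₂ ≤ H2 (n₁ + n₂) (m₁ + m₂) := by
  have hc2 := c2_pos
  have h2c2 := one_le_two_c2
  have hd2 := one_le_d2
  have hn₂' : (1:ℝ) ≤ n₂ := by exact_mod_cast hn₂
  have hn₁' : (1:ℝ) ≤ n₁ := by exact_mod_cast hn₁
  have hle : (n₂:ℝ) ≤ n₁ := by exact_mod_cast h
  have ha1 : (1:ℝ) ≤ (m₁:ℝ) := by exact_mod_cast hm₁
  have hm12 : m₁ + m₂ ≠ 1 := by omega
  have hsum : ((m₁ + m₂ : ℕ):ℝ) - 1 = (m₁:ℝ) + ((m₂:ℝ) - 1) := by push_cast; ring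
  rw [G2, H2, H2, if_neg hm12, hsum]
  by_cases hm2 : m₂ = 1
  · subst hm2
    rw [if_pos rfl]
    have hla : (0:ℝ) ≤ logb 2 (m₁:ℝ) := Real.logb_nonneg (by norm_num) ha1
    have hsimp : (m₁:ℝ) + (((1:ℕ):ℝ) - 1) = (m₁:ℝ) := by push_cast; ring
    rw [hsimp]
    push_cast
    nlinarith [mul_nonneg (by linarith : (0:ℝ) ≤ (n₂:ℝ))
      (by nlinarith : (0:ℝ) ≤ d2 + c2 * logb 2 (m₁:ℝ) - 1)]
  · rw [if_neg hm2]
    have hm2' : 2 ≤ m₂ := by omega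
    have hb1 : (1:ℝ) ≤ (m₂:ℝ) - 1 := by
      have : (2:ℝ) ≤ (m₂:ℝ) := by exact_mod_cast hm2'
      linarith
    set a : ℝ := (m₁:ℝ) with ha
    set b : ℝ := (m₂:ℝ) - 1 with hb
    have hapos : (0:ℝ) < a := by linarith
    have hbpos : (0:ℝ) < b := by linarith
    have f1 : logb 2 a ≤ logb 2 (a + b) :=
      Real.logb_le_logb_of_le (by norm_num) hapos (by linarith)
    have hmul : logb 2 (4 * (a * b)) = 2 + logb 2 a + logb 2 b := by
      rw [Real.logb_mul (by norm_num) (by positivity),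
        Real.logb_mul (by positivity) (by positivity),
        show (4:ℝ) = 2^(2:ℕ) by norm_num, Real.logb_pow,
        Real.logb_self_eq_one (by norm_num)]
      ring
    have hsq : logb 2 ((a + b)^(2:ℕ)) = 2 * logb 2 (a + b) := by
      rw [Real.logb_pow]; norm_num
    have f3 : logb 2 a + logb 2 b + 2 ≤ 2 * logb 2 (a + b) := by
      have hle4 : 4 * (a * b) ≤ (a + b)^(2:ℕ) := by nlinarith [sq_nonneg (a-b)]
      have := Real.logb_le_logb_of_le (b := 2) (by norm_num) (by positivity) hle4
      rw [hmul, hsq] at this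
      linarith
    -- final inequality
    push_cast
    nlinarith [mul_nonneg (by linarith : (0:ℝ) ≤ (n₁:ℝ) - n₂)
        (mul_nonneg hc2.le (by linarith : (0:ℝ) ≤ logb 2 (a + b) - logb 2 a)),
      mul_le_mul_of_nonneg_left f3 (mul_nonneg (by linarith : (0:ℝ) ≤ (n₂:ℝ)) hc2.le),
      mul_nonneg (by linarith : (0:ℝ) ≤ (n₂:ℝ)) (by linarith : (0:ℝ) ≤ 2 * c2 - 1)]
end
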